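/- Let H be a graph with a path P on vertices v₁,…,v_k and remaining vertices v_{k+1},…,v_n. Form H' from H by adding new vertices u_{k+1},…,u_n, where u_i is adjacent exactly to v_{i−1} and v_i, and let P' be the path v₁,…,v_k, u_{k+1}, v_{k+1}, u_{k+2}, …, u_n, v_n. Then P' is a Hamilton path of H', and every P'-filleting of H' contains an induced P-filleting of H. -/

import Mathlib

open SimpleGraph


/-- `J` is a filleting of `H` relative to the edge set `Pe` (the edges of a path `P` of
`H`): `J` is obtained from `H` by subdividing, at least once, every edge of `H` not in
`Pe`, and not subdividing the edges in `Pe`.  This is expressed by a vertex embedding `f`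
and, for every edge of `H`, an induced path (`route`) of `J` between the images of its
ends; edges in `Pe` keep length 1, edges outside `Pe` get length at least 2; internal
vertices of the routes are new and distinct for distinct edges; and the edges and
vertices of `J` are exactly those arising from the routes and from `f`. -/
def IsFilleting {α β : Type*} (H : SimpleGraph α) (Pe : Set (Sym2 α))
    (J : SimpleGraph β) : Prop :=
  ∃ (f : α ↪ β) (route : ∀ ⦃u v : α⦄, H.Adj u v → J.Walk (f u) (f v)),
    (∀ (u v : α) (h : H.Adj u v), (route h).IsPath) ∧
    (∀ (u v : α) (h : H.Adj u v), route h.symm = (route h).reverse) ∧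
    (∀ (u v : α) (h : H.Adj u v), s(u, v) ∈ Pe → (route h).length = 1) ∧
    (∀ (u v : α) (h : H.Adj u v), s(u, v) ∉ Pe → 2 ≤ (route h).length) ∧
    (∀ (u v : α) (h : H.Adj u v), ∀ w ∈ (route h).support,
      w ≠ f u → w ≠ f v → ∀ x : α, f x ≠ w) ∧
    (∀ (u v x y : α) (h : H.Adj u v) (h' : H.Adj x y), s(u, v) ≠ s(x, y) →
      ∀ w ∈ (route h).support, w ≠ f u → w ≠ f v → w ∉ (route h').support) ∧
    (∀ a b : β, J.Adj a b → ∃ (u v : α) (h : H.Adj u v), s(a, b) ∈ (route h).edges) ∧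
    (∀ b : β, (∃ x : α, f x = b) ∨ ∃ (u v : α) (h : H.Adj u v), b ∈ (route h).support)


/-- The vertex `v_{i-1}` preceding the new vertex `u_i`: for `i = 0` it is the last
vertex `y` of the path `P`, and otherwise it is the previous remaining vertex. -/
def auxPrev {α : Type*} (y : α) (ws : List α) (i : Fin ws.length) : α :=
  if h : i.1 = 0 then y else ws.get ⟨i.1 - 1, lt_of_le_of_lt (Nat.sub_le _ _) i.2⟩

/-- The graph `H'` obtained from `H` by adding, for each remaining (non-path) vertex
`ws.get i`, a new vertex `Sum.inr i` adjacent exactly to the preceding vertex and to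
`ws.get i`. -/
def HPrime {α : Type*} [DecidableEq α] (H : SimpleGraph α) (y : α) (ws : List α) :
    SimpleGraph (α ⊕ Fin ws.length) :=
  SimpleGraph.fromRel (fun a b =>
    match a, b with
    | Sum.inl a, Sum.inl b => H.Adj a b
    | Sum.inl a, Sum.inr i => a = auxPrev y ws i ∨ a = ws.get i
    | _, _ => False)

namespace MyAux

variable {β : Type*} {J : SimpleGraph β} {S : Set β}

def toInduce : ∀ {a b : β} (w : J.Walk a b) (h : ∀ v ∈ w.support, v ∈ S),
    (J.induce S).Walk ⟨a, h a w.start_mem_support⟩ ⟨b, h b w.end_mem_support⟩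
  | _, _, Walk.nil, _ => Walk.nil
  | _, _, Walk.cons hadj q, h =>
    Walk.cons (by exact hadj) (toInduce q (fun v hv => h v (by simp [hv])))

lemma toInduce_support : ∀ {a b : β} (w : J.Walk a b) (h : ∀ v ∈ w.support, v ∈ S),
    (toInduce w h).support.map Subtype.val = w.support
  | _, _, Walk.nil, _ => by simp [toInduce]
  | _, _, Walk.cons hadj q, h => by
      exact congrArg (List.cons _) (toInduce_support q _)

lemma toInduce_edges : ∀ {a b : β} (w : J.Walk a b) (h : ∀ v ∈ w.support, v ∈ S),
    (toInduce w h).edges.map (Sym2.map Subtype.val) = w.edges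
  | _, _, Walk.nil, _ => by simp [toInduce]
  | _, _, Walk.cons hadj q, h => by
      exact congrArg (List.cons _) (toInduce_edges q _)

lemma toInduce_length : ∀ {a b : β} (w : J.Walk a b) (h : ∀ v ∈ w.support, v ∈ S),
    (toInduce w h).length = w.length
  | _, _, Walk.nil, _ => by simp [toInduce]
  | _, _, Walk.cons hadj q, h => by
      exact congrArg Nat.succ (toInduce_length q _)

lemma toInduce_isPath {a b : β} {w : J.Walk a b} (hw : w.IsPath)
    (h : ∀ v ∈ w.support, v ∈ S) : (toInduce w h).IsPath := by
  rw [Walk.isPath_def]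
  have := hw.support_nodup
  rw [← toInduce_support w h] at this
  exact this.of_map _

lemma toInduce_congr {a b : β} {w1 w2 : J.Walk a b} (e : w1 = w2)
    (h1 : ∀ v ∈ w1.support, v ∈ S) (h2 : ∀ v ∈ w2.support, v ∈ S) :
    toInduce w1 h1 = toInduce w2 h2 := by subst e; rfl

lemma toInduce_append : ∀ {a b c : β} (p : J.Walk a b) (q : J.Walk b c)
    (h : ∀ v ∈ (p.append q).support, v ∈ S)
    (h1 : ∀ v ∈ p.support, v ∈ S) (h2 : ∀ v ∈ q.support, v ∈ S),
    toInduce (p.append q) h = (toInduce p h1).append (toInduce q h2)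
  | _, _, _, Walk.nil, q, h, h1, h2 => by
      simp only [Walk.nil_append]; exact toInduce_congr rfl _ _
  | _, _, _, Walk.cons hadj p, q, h, h1, h2 => by
      simp only [Walk.cons_append, toInduce]
      rw [toInduce_append p q _ (fun v hv => h1 v (by simp [hv])) h2]
      rfl

lemma toInduce_reverse : ∀ {a b : β} (w : J.Walk a b) (h : ∀ v ∈ w.support, v ∈ S)
    (h' : ∀ v ∈ w.reverse.support, v ∈ S),
    toInduce w.reverse h' = (toInduce w h).reverse
  | _, _, Walk.nil, h, h' => by
      rfl
  | _, _, Walk.cons hadj q, h, h' => by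
      have hq : ∀ v ∈ q.support, v ∈ S := fun v hv => h v (by simp [hv])
      have hqr : ∀ v ∈ q.reverse.support, v ∈ S := by simpa using hq
      rw [toInduce_congr (Walk.reverse_cons hadj q) h' (by
        intro v hv; apply h'; rw [Walk.reverse_cons]; exact hv)]
      rw [toInduce_append q.reverse (Walk.cons hadj.symm Walk.nil) _ hqr
        (by intro v hv; simp at hv; rcases hv with rfl | rfl
            · exact h _ (by simp)
            · exact h _ (by simp))]
      rw [toInduce_reverse q hq hqr]
      simp only [toInduce]
      exact (Walk.reverse_cons _ _).symm

end MyAux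

namespace MyAux

variable {α : Type*} [DecidableEq α] {H : SimpleGraph α} {y : α} {ws : List α}

lemma hp_adj_inl_inl {a b : α} :
    (HPrime H y ws).Adj (Sum.inl a) (Sum.inl b) ↔ H.Adj a b := by
  simp only [HPrime, SimpleGraph.fromRel_adj]
  constructor
  · rintro ⟨-, h | h⟩
    · exact h
    · exact h.symm
  · intro h
    exact ⟨by simpa using h.ne, Or.inl h⟩

lemma hp_adj_inl_inr {a : α} {i : Fin ws.length} :
    (HPrime H y ws).Adj (Sum.inl a) (Sum.inr i) ↔ (a = auxPrev y ws i ∨ a = ws.get i) := by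
  simp only [HPrime, SimpleGraph.fromRel_adj]
  constructor
  · rintro ⟨-, h | h⟩
    · exact h
    · exact h.elim
  · intro h
    exact ⟨by simp, Or.inl h⟩

lemma hp_adj_inr_inr {i j : Fin ws.length} :
    ¬ (HPrime H y ws).Adj (Sum.inr i) (Sum.inr j) := by
  simp only [HPrime, SimpleGraph.fromRel_adj]
  rintro ⟨-, h | h⟩ <;> exact h

def prevAt (y : α) (ws : List α) (k : ℕ) : α :=
  if k = 0 then y else ws.getD (k-1) y

lemma prevAt_eq_auxPrev (i : Fin ws.length) : prevAt y ws i.1 = auxPrev y ws i := by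
  unfold prevAt auxPrev
  by_cases h : i.1 = 0
  · simp [h]
  · rw [if_neg h, dif_neg h, List.getD_eq_getElem _ _ (by omega)]
    simp [List.get_eq_getElem]

lemma prevAt_succ {k : ℕ} (h : k < ws.length) :
    prevAt y ws (k+1) = ws.get ⟨k, h⟩ := by
  unfold prevAt
  rw [if_neg (by omega), List.getD_eq_getElem]
  rfl

def segV (ws : List α) (i : Fin ws.length) : List (α ⊕ Fin ws.length) :=
  [Sum.inr i, Sum.inl (ws.get i)]

def segE (y : α) (ws : List α) (i : Fin ws.length) : List (Sym2 (α ⊕ Fin ws.length)) :=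
  [s(Sum.inl (auxPrev y ws i), Sum.inr i), s(Sum.inr i, Sum.inl (ws.get i))]

lemma tail_exists (H : SimpleGraph α) (y : α) (ws : List α) (hy : y ∉ ws)
    (hnd : ws.Nodup) :
    ∀ (m k : ℕ) (hk : k + m = ws.length),
    ∃ w : (HPrime H y ws).Walk (Sum.inl (prevAt y ws k)) (Sum.inl (prevAt y ws ws.length)),
      w.support = Sum.inl (prevAt y ws k) ::
        (List.ofFn (fun j : Fin m => segV ws ⟨k+j.1, by omega⟩)).flatten ∧
      w.edges = (List.ofFn (fun j : Fin m => segE y ws ⟨k+j.1, by omega⟩)).flatten ∧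
      w.IsPath := by
  intro m
  induction m with
  | zero =>
    intro k hk
    have hk' : k = ws.length := by omega
    subst hk'
    exact ⟨Walk.nil, by simp, by simp, by simp⟩
  | succ m ih =>
    intro k hk
    have hkn : k < ws.length := by omega
    obtain ⟨w', hsupp, hedges, hpath⟩ := ih (k+1) (by omega)
    have e1 : (HPrime H y ws).Adj (Sum.inl (prevAt y ws k)) (Sum.inr ⟨k, hkn⟩) := by
      rw [hp_adj_inl_inr]
      left
      exact prevAt_eq_auxPrev ⟨k, hkn⟩
    have e2 : (HPrime H y ws).Adj (Sum.inr ⟨k, hkn⟩) (Sum.inl (prevAt y ws (k+1))) := by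
      rw [SimpleGraph.adj_comm, hp_adj_inl_inr]
      right
      exact prevAt_succ hkn
    refine ⟨Walk.cons e1 (Walk.cons e2 w'), ?_, ?_, ?_⟩
    · rw [Walk.support_cons, Walk.support_cons, hsupp, List.ofFn_succ]
      have : (fun j : Fin m => segV ws ⟨k + (j.succ).1, by omega⟩)
           = (fun j : Fin m => segV ws ⟨(k+1) + j.1, by omega⟩) := by
        funext j
        exact congrArg (segV ws) (Fin.ext (by simp; omega))
      simp only [this, List.flatten_cons]
      have h0 : segV ws ⟨k + (0 : Fin (m+1)).1, by omega⟩ = [Sum.inr ⟨k, hkn⟩, Sum.inl (prevAt y ws (k+1))] := by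
        rw [prevAt_succ hkn]
        exact congrArg (segV ws) (Fin.ext (by simp))
      rw [h0]
      simp
    · rw [Walk.edges_cons, Walk.edges_cons, hedges, List.ofFn_succ]
      have : (fun j : Fin m => segE y ws ⟨k + (j.succ).1, by omega⟩)
           = (fun j : Fin m => segE y ws ⟨(k+1) + j.1, by omega⟩) := by
        funext j
        exact congrArg (segE y ws) (Fin.ext (by simp; omega))
      simp only [this, List.flatten_cons]
      have h0 : segE y ws ⟨k + (0 : Fin (m+1)).1, by omega⟩ =
          [s(Sum.inl (prevAt y ws k), Sum.inr ⟨k, hkn⟩),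
           s(Sum.inr ⟨k, hkn⟩, Sum.inl (prevAt y ws (k+1)))] := by
        have hf : (⟨k + (0 : Fin (m+1)).1, by omega⟩ : Fin ws.length) = ⟨k, hkn⟩ :=
          Fin.ext (by simp)
        rw [hf]
        unfold segE
        rw [prevAt_succ hkn, ← prevAt_eq_auxPrev ⟨k, hkn⟩]
      rw [h0]
      simp
    · rw [Walk.cons_isPath_iff, Walk.cons_isPath_iff]
      have hmem : ∀ v, v ∈ w'.support ↔ v = Sum.inl (prevAt y ws (k+1)) ∨
          ∃ j : Fin ws.length, k+1 ≤ j.1 ∧ (v = Sum.inr j ∨ v = Sum.inl (ws.get j)) := by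
        intro v
        rw [hsupp]
        simp only [List.mem_cons, List.mem_flatten, List.mem_ofFn, Set.mem_range]
        constructor
        · rintro (rfl | ⟨l, ⟨j, rfl⟩, hv⟩)
          · left; rfl
          · right
            refine ⟨⟨(k+1)+j.1, by omega⟩, by simp, ?_⟩
            simpa [segV] using hv
        · rintro (rfl | ⟨j, hj1, hj2⟩)
          · left; rfl
          · right
            refine ⟨segV ws j, ⟨⟨j.1 - (k+1), by omega⟩, ?_⟩, ?_⟩
            · exact congrArg (segV ws) (Fin.ext (by simp; omega))
            · rcases hj2 with rfl | rfl <;> simp [segV]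
      refine ⟨⟨hpath, ?_⟩, ?_⟩
      · rw [hmem]
        rintro (h | ⟨j, hj1, hj2 | hj2⟩)
        · exact Sum.inr_ne_inl h
        · have : (⟨k, hkn⟩ : Fin ws.length) = j := Sum.inr.inj hj2
          have hval : k = j.1 := congrArg Fin.val this
          omega
        · exact absurd hj2 (by simp)
      · rw [Walk.support_cons, List.mem_cons, hmem]
        rintro (h | h | ⟨j, hj1, hj2 | hj2⟩)
        · exact Sum.inl_ne_inr h
        · -- prevAt k = prevAt (k+1) = ws.get ⟨k⟩
          have h' : prevAt y ws k = ws.get ⟨k, hkn⟩ := by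
            rw [← prevAt_succ hkn]; exact Sum.inl.inj h
          unfold prevAt at h'
          split at h'
          · exact hy (h' ▸ List.get_mem ws _)
          · rw [List.getD_eq_getElem _ _ (by omega)] at h'
            have := (List.Nodup.get_inj_iff hnd).mp h'
            have := Fin.val_eq_of_eq this
            simp at this
            omega
        · exact absurd hj2 (by simp)
        · have h' : prevAt y ws k = ws.get j := Sum.inl.inj hj2
          unfold prevAt at h'
          split at h'
          · exact hy (h' ▸ List.get_mem ws _)
          · rw [List.getD_eq_getElem _ _ (by omega)] at h'
            have := (List.Nodup.get_inj_iff hnd).mp h'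
            have := Fin.val_eq_of_eq this
            simp at this
            omega

end MyAux


namespace MyAux
lemma walk_length_one {V : Type*} {G : SimpleGraph V} {u v : V} (w : G.Walk u v)
    (h : w.length = 1) : w.support = [u, v] ∧ w.edges = [s(u, v)] := by
  cases w with
  | nil => simp at h
  | cons hadj q =>
    cases q with
    | nil => simp
    | cons h2 q2 => simp [Walk.length_cons] at h

lemma sym2_inl_eq {α γ : Type*} {a b c d : α} :
    (s(Sum.inl a, Sum.inl b) : Sym2 (α ⊕ γ)) = s(Sum.inl c, Sum.inl d) ↔
      s(a, b) = s(c, d) := by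
  simp [Sym2.eq_iff]
end MyAux

open MyAux

theorem stmt_19 {α : Type} [DecidableEq α] (H : SimpleGraph α) (x y : α)
    (p : H.Walk x y) (hp : p.IsPath) (ws : List α) (hnd : ws.Nodup)
    (hdisj : ∀ a ∈ ws, a ∉ p.support) (hcov : ∀ a : α, a ∈ p.support ∨ a ∈ ws) :
    ∃ (z : α ⊕ Fin ws.length) (p' : (HPrime H y ws).Walk (Sum.inl x) z),
      p'.IsPath ∧ (∀ v : α ⊕ Fin ws.length, v ∈ p'.support) ∧
      p'.support = p.support.map Sum.inl ++
        (List.ofFn (fun i : Fin ws.length =>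
          [Sum.inr i, Sum.inl (ws.get i)] : Fin ws.length → List (α ⊕ Fin ws.length))).flatten ∧
      ∀ (β : Type) (J : SimpleGraph β),
        IsFilleting (HPrime H y ws) {e | e ∈ p'.edges} J →
          ∃ S : Set β, IsFilleting H {e | e ∈ p.edges} (J.induce S) := by
  classical
  have hy : y ∉ ws := fun h => hdisj y h p.end_mem_support
  obtain ⟨tw, htsupp, htedges, htpath⟩ := tail_exists H y ws hy hnd ws.length 0 (by omega)
  have h0 : prevAt y ws 0 = y := rfl
  set n := ws.length with hn
  let inlHom : H →g HPrime H y ws := ⟨Sum.inl, fun {a b} h => hp_adj_inl_inl.mpr h⟩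
  let tw' : (HPrime H y ws).Walk (Sum.inl y) (Sum.inl (prevAt y ws n)) :=
    tw.copy (by rw [h0]) rfl
  let p' : (HPrime H y ws).Walk (Sum.inl x) (Sum.inl (prevAt y ws n)) :=
    (p.map inlHom).append tw'
  -- the target flatten list
  set Ffl : List (α ⊕ Fin n) := (List.ofFn (fun i : Fin n =>
      ([Sum.inr i, Sum.inl (ws.get i)] : List (α ⊕ Fin n)))).flatten with hFfl
  have hflV : (List.ofFn (fun j : Fin n => segV ws ⟨0 + j.1, by omega⟩)).flatten = Ffl := by
    refine congrArg List.flatten (congrArg List.ofFn (funext fun j => ?_))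
    have hj : (⟨0 + j.1, by omega⟩ : Fin n) = j := Fin.ext (by simp)
    rw [hj]
    rfl
  have htsupp' : tw'.support = Sum.inl y :: Ffl := by
    show (tw.copy _ _).support = _
    rw [Walk.support_copy, htsupp, hflV, h0]
  have hps : p'.support = p.support.map Sum.inl ++ Ffl := by
    show ((p.map inlHom).append tw').support = _
    rw [Walk.support_append, Walk.support_map, htsupp']
    rfl
  have hFmem : ∀ v : α ⊕ Fin n, v ∈ Ffl ↔
      ∃ i : Fin n, v = Sum.inr i ∨ v = Sum.inl (ws.get i) := by
    intro v
    rw [hFfl, List.mem_flatten]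
    constructor
    · rintro ⟨l, hl, hv⟩
      rw [List.mem_ofFn] at hl
      obtain ⟨i, rfl⟩ := hl
      simp only [List.mem_cons, List.mem_singleton, List.not_mem_nil, or_false] at hv
      exact ⟨i, hv⟩
    · rintro ⟨i, hv⟩
      refine ⟨_, List.mem_ofFn.mpr ⟨i, rfl⟩, ?_⟩
      rcases hv with rfl | rfl <;> simp
  -- Nodup / IsPath
  have hFnd : Ffl.Nodup := by
    have h := htpath.support_nodup
    rw [htsupp, hflV] at h
    exact (List.nodup_cons.mp h).2
  have hpath' : p'.IsPath := by
    rw [Walk.isPath_def, hps]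
    refine List.Nodup.append ?_ hFnd ?_
    · exact hp.support_nodup.map Sum.inl_injective
    · intro v hv1 hv2
      rw [List.mem_map] at hv1
      obtain ⟨a, ha, rfl⟩ := hv1
      rw [hFmem] at hv2
      obtain ⟨i, hv | hv⟩ := hv2
      · exact Sum.inl_ne_inr hv
      · exact hdisj _ ((Sum.inl.inj hv) ▸ List.get_mem ws _) ha
  have hcov' : ∀ v : α ⊕ Fin n, v ∈ p'.support := by
    intro v
    rw [hps, List.mem_append]
    rcases v with a | i
    · rcases hcov a with h | h
      · exact Or.inl (List.mem_map_of_mem h)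
      · obtain ⟨i, hi⟩ := List.mem_iff_get.mp h
        exact Or.inr ((hFmem _).mpr ⟨i, Or.inr (by rw [hi])⟩)
    · exact Or.inr ((hFmem _).mpr ⟨i, Or.inl rfl⟩)
  -- edges characterization
  have htedges' : tw'.edges = (List.ofFn (fun j : Fin n => segE y ws ⟨0 + j.1, by omega⟩)).flatten := by
    show (tw.copy _ _).edges = _
    rw [Walk.edges_copy, htedges]
  have hpe : ∀ e, e ∈ p'.edges ↔ (∃ e' ∈ p.edges, Sym2.map Sum.inl e' = e) ∨
      ∃ i : Fin n, e = s(Sum.inl (auxPrev y ws i), Sum.inr i) ∨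
        e = s(Sum.inr i, Sum.inl (ws.get i)) := by
    intro e
    show e ∈ ((p.map inlHom).append tw').edges ↔ _
    rw [Walk.edges_append, Walk.edges_map, List.mem_append, List.mem_map, htedges',
      List.mem_flatten]
    constructor
    · rintro (⟨e', he', rfl⟩ | ⟨l, hl, he⟩)
      · exact Or.inl ⟨e', he', rfl⟩
      · rw [List.mem_ofFn] at hl
        obtain ⟨j, rfl⟩ := hl
        refine Or.inr ⟨⟨0 + j.1, by omega⟩, ?_⟩
        simpa only [segE, List.mem_cons, List.mem_singleton, List.not_mem_nil, or_false]
          using he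
    · rintro (⟨e', he', rfl⟩ | ⟨i, hi⟩)
      · exact Or.inl ⟨e', he', rfl⟩
      · refine Or.inr ⟨segE y ws i, List.mem_ofFn.mpr ⟨⟨i.1, by omega⟩, ?_⟩, ?_⟩
        · exact congrArg (segE y ws) (Fin.ext (by simp))
        · rcases hi with rfl | rfl <;> simp [segE]
  have hA : ∀ a b : α, (s(Sum.inl a, Sum.inl b) : Sym2 (α ⊕ Fin n)) ∈ p'.edges ↔
      s(a, b) ∈ p.edges := by
    intro a b
    rw [hpe]
    constructor
    · rintro (⟨e', he', heq⟩ | ⟨i, hi | hi⟩)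
      · induction e' using Sym2.ind with
        | _ u v =>
          rw [Sym2.map_pair_eq] at heq
          rwa [← sym2_inl_eq.mp heq]
      · rw [Sym2.eq_iff] at hi
        rcases hi with ⟨-, h⟩ | ⟨h, -⟩ <;> exact absurd h (by simp)
      · rw [Sym2.eq_iff] at hi
        rcases hi with ⟨h, -⟩ | ⟨-, h⟩ <;> exact absurd h (by simp)
    · intro h
      exact Or.inl ⟨s(a, b), h, Sym2.map_pair_eq _ _ _⟩
  have hB : ∀ (u : α ⊕ Fin n) (i : Fin n), (HPrime H y ws).Adj u (Sum.inr i) →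
      s(u, Sum.inr i) ∈ p'.edges := by
    rintro (a | j) i hadj
    · rw [hp_adj_inl_inr] at hadj
      rw [hpe]
      rcases hadj with rfl | rfl
      · exact Or.inr ⟨i, Or.inl rfl⟩
      · exact Or.inr ⟨i, Or.inr (Sym2.eq_swap)⟩
    · exact absurd hadj hp_adj_inr_inr
  refine ⟨Sum.inl (prevAt y ws n), p', hpath', hcov', hps, ?_⟩
  intro β J hF
  obtain ⟨f, route, h1, h2, h3, h4, h5, h6, h7, h8⟩ := hF
  have hlen1 : ∀ (u : α ⊕ Fin n) (i : Fin n) (h' : (HPrime H y ws).Adj u (Sum.inr i)),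
      (route h').support = [f u, f (Sum.inr i)] ∧
      (route h').edges = [s(f u, f (Sum.inr i))] :=
    fun u i h' => walk_length_one _ (h3 _ _ h' (hB u i h'))
  have hlen1' : ∀ (i : Fin n) (v : α ⊕ Fin n) (h' : (HPrime H y ws).Adj (Sum.inr i) v),
      (route h').support = [f (Sum.inr i), f v] ∧
      (route h').edges = [s(f (Sum.inr i), f v)] := by
    intro i v h'
    have h'' : (HPrime H y ws).Adj v (Sum.inr i) := h'.symm
    have e1 : route h' = (route h'').reverse := h2 _ _ h''
    obtain ⟨hsup, hedg⟩ := hlen1 v i h''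
    constructor
    · rw [e1, Walk.support_reverse, hsup]
      rfl
    · rw [e1, Walk.edges_reverse, hedg]
      simp [Sym2.eq_swap]
  set S : Set β := {b | ∀ i : Fin n, b ≠ f (Sum.inr i)} with hS
  have hmemS : ∀ b : β, b ∈ S ↔ ∀ i : Fin n, b ≠ f (Sum.inr i) := fun b => Iff.rfl
  have hfSl : ∀ a : α, f (Sum.inl a) ∈ S := by
    intro a
    rw [hmemS]
    intro i he
    exact absurd (f.injective he) (by simp)
  have hRS : ∀ {a b : α} (h' : (HPrime H y ws).Adj (Sum.inl a) (Sum.inl b)),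
      ∀ v ∈ (route h').support, v ∈ S := by
    intro a b h' v hv
    by_cases hva : v = f (Sum.inl a)
    · exact hva ▸ hfSl a
    by_cases hvb : v = f (Sum.inl b)
    · exact hvb ▸ hfSl b
    rw [hmemS]
    intro i he
    exact h5 _ _ h' v hv hva hvb (Sum.inr i) he.symm
  refine ⟨S, ⟨fun a => ⟨f (Sum.inl a), hfSl a⟩,
      fun a b hab => Sum.inl.inj (f.injective (congrArg Subtype.val hab))⟩,
    fun a b h => toInduce (route (hp_adj_inl_inl.mpr h)) (hRS _),
    ?_, ?_, ?_, ?_, ?_, ?_, ?_, ?_⟩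
  · intro u v h
    exact toInduce_isPath (h1 _ _ _) _
  · intro u v h
    have e1 : route (hp_adj_inl_inl.mpr h.symm) = (route (hp_adj_inl_inl.mpr h)).reverse :=
      h2 _ _ (hp_adj_inl_inl.mpr h)
    exact (toInduce_congr e1 _ (by rw [← e1]; exact hRS _)).trans (toInduce_reverse _ _ _)
  · intro u v h hmem
    rw [toInduce_length]
    exact h3 _ _ _ ((hA u v).mpr hmem)
  · intro u v h hmem
    rw [toInduce_length]
    exact h4 _ _ _ (fun hc => hmem ((hA u v).mp hc))
  · intro u v h w hw hwu hwv xx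
    have hw' : w.val ∈ (route (hp_adj_inl_inl.mpr h)).support := by
      rw [← toInduce_support _ (hRS _)]
      exact List.mem_map_of_mem hw
    have h5' := h5 _ _ (hp_adj_inl_inl.mpr h) w.val hw'
      (fun he => hwu (Subtype.ext he)) (fun he => hwv (Subtype.ext he)) (Sum.inl xx)
    exact fun he => h5' (congrArg Subtype.val he)
  · intro u v x2 y2 h h' hne w hw hwu hwv hcontra
    have hw1 : w.val ∈ (route (hp_adj_inl_inl.mpr h)).support := by
      rw [← toInduce_support _ (hRS _)]
      exact List.mem_map_of_mem hw
    have hw2 : w.val ∈ (route (hp_adj_inl_inl.mpr h')).support := by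
      rw [← toInduce_support _ (hRS _)]
      exact List.mem_map_of_mem hcontra
    exact h6 _ _ _ _ (hp_adj_inl_inl.mpr h) (hp_adj_inl_inl.mpr h')
      (fun hc => hne (sym2_inl_eq.mp hc)) w.val hw1
      (fun he => hwu (Subtype.ext he)) (fun he => hwv (Subtype.ext he)) hw2
  · intro a' b' hab
    have hJ : J.Adj a'.val b'.val := hab
    obtain ⟨u, v, h', he⟩ := h7 _ _ hJ
    have noinr : ∀ (c : α ⊕ Fin n) (i : Fin n),
        (s(a'.val, b'.val) : Sym2 β) = s(f c, f (Sum.inr i)) → False := by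
      intro c i hc
      rw [Sym2.eq_iff] at hc
      rcases hc with ⟨-, hc⟩ | ⟨hc, -⟩
      · exact (hmemS _).mp b'.2 i hc
      · exact (hmemS _).mp a'.2 i hc
    rcases u with a | i
    · rcases v with b | i
      · refine ⟨a, b, hp_adj_inl_inl.mp h', ?_⟩
        have he' : s(a'.val, b'.val) ∈ (route (hp_adj_inl_inl.mpr (hp_adj_inl_inl.mp h'))).edges := he
        rw [← toInduce_edges _ (hRS _), List.mem_map] at he'
        obtain ⟨e, hmem, heq⟩ := he'
        induction e using Sym2.ind with
        | _ w1 w2 =>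
          rw [Sym2.map_pair_eq, Sym2.eq_iff] at heq
          rcases heq with ⟨hq1, hq2⟩ | ⟨hq1, hq2⟩
          · rwa [show s(a', b') = s(w1, w2) from by
              rw [Sym2.eq_iff]; exact Or.inl ⟨(Subtype.ext hq1).symm, (Subtype.ext hq2).symm⟩]
          · rwa [show s(a', b') = s(w1, w2) from by
              rw [Sym2.eq_iff]; exact Or.inr ⟨(Subtype.ext hq2).symm, (Subtype.ext hq1).symm⟩]
      · obtain ⟨-, hedg⟩ := hlen1 (Sum.inl a) i h'
        rw [hedg, List.mem_singleton] at he
        exact absurd he (fun hc => noinr _ i hc)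
    · obtain ⟨-, hedg⟩ := hlen1' i v h'
      rw [hedg, List.mem_singleton] at he
      rw [Sym2.eq_swap (a := f (Sum.inr i))] at he
      exact absurd he (fun hc => noinr _ i hc)
  · intro b'
    have hval : ∀ a : α, f (Sum.inl a) = b'.val →
        ∃ xx : α, (⟨f (Sum.inl xx), hfSl xx⟩ : ↥S) = b' := fun a ha => ⟨a, Subtype.ext ha⟩
    rcases h8 b'.val with ⟨xx, hxx⟩ | ⟨u, v, h', hb⟩
    · rcases xx with a | i
      · exact Or.inl (hval a hxx)
      · exact absurd hxx ((hmemS _).mp b'.2 i).symm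
    · rcases u with a | i
      · rcases v with b | i
        · refine Or.inr ⟨a, b, hp_adj_inl_inl.mp h', ?_⟩
          have hb' : b'.val ∈ (route (hp_adj_inl_inl.mpr (hp_adj_inl_inl.mp h'))).support := hb
          rw [← toInduce_support _ (hRS _), List.mem_map] at hb'
          obtain ⟨w, hw, hweq⟩ := hb'
          exact (Subtype.ext hweq : w = b') ▸ hw
        · obtain ⟨hsup, -⟩ := hlen1 (Sum.inl a) i h'
          rw [hsup, List.mem_cons, List.mem_singleton] at hb
          rcases hb with hb | hb
          · exact Or.inl (hval a hb.symm)
          · exact absurd hb.symm ((hmemS _).mp b'.2 i).symm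
      · obtain ⟨hsup, -⟩ := hlen1' i v h'
        rw [hsup, List.mem_cons, List.mem_singleton] at hb
        rcases hb with hb | hb
        · exact absurd hb.symm ((hmemS _).mp b'.2 i).symm
        · rcases v with b | j
          · exact Or.inl (hval b hb.symm)
          · exact absurd h' hp_adj_inr_inr
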